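/- Let ℓ ≥ 1 and let (ℓ, G, H, ⟨≺_H, σ_H⟩) be an instance of Stack Layout Extension with V(G) = V(H) (so only edges are missing). Let e ∈ E_add be a missing edge such that |S(e)| ≥ m_add, where S(e) is the set of pages p ∈ {1,…,ℓ} such that ⟨≺_H, σ_H ∪ {(e,p)}⟩ is an ℓ-page stack layout of the graph H together with the edge e. Then G admits an ℓ-page stack layout extending ⟨≺_H, σ_H⟩ if and only if the graph G − e (obtained from G by deleting e) admits an ℓ-page stack layout extending ⟨≺_H, σ_H⟩. -/
import Mathlib


/-- Two edges `e` and `f` alternate (cross) with respect to the vertex position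
function `pos`: `e = {a, c}` and `f = {b, d}` with `pos a < pos b < pos c < pos d`. -/
def EdgesCross {V : Type*} (pos : V → ℕ) (e f : Sym2 V) : Prop :=
  ∃ a b c d : V, e = s(a, c) ∧ f = s(b, d) ∧ pos a < pos b ∧ pos b < pos c ∧ pos c < pos d

/-- `⟨pos, σ⟩` is an `ℓ`-page stack layout of the graph with vertex set `Vs` and
edge set `Es`: `pos` induces a linear order of `Vs` and no two edges assigned to a
common page alternate. -/
def IsStackLayout {V : Type*} (ℓ : ℕ) (Vs : Finset V) (Es : Finset (Sym2 V))
    (pos : V → ℕ) (σ : Sym2 V → Fin ℓ) : Prop :=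
  Set.InjOn pos ↑Vs ∧ ∀ e ∈ Es, ∀ f ∈ Es, σ e = σ f → ¬ EdgesCross pos e f

/-- `⟨posG, σG⟩` extends `⟨posH, σH⟩`: the linear order restricted to `VH` agrees with
the order induced by `posH`, and the page assignment restricted to `EH` equals `σH`. -/
def ExtendsLayout {V : Type*} {ℓ : ℕ} (VH : Finset V) (EH : Finset (Sym2 V))
    (posH : V → ℕ) (σH : Sym2 V → Fin ℓ) (posG : V → ℕ) (σG : Sym2 V → Fin ℓ) : Prop :=
  (∀ u ∈ VH, ∀ v ∈ VH, (posH u < posH v ↔ posG u < posG v)) ∧ ∀ e ∈ EH, σG e = σH e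

theorem edgesCross_irrefl {V : Type*} (pos : V → ℕ) (e : Sym2 V) : ¬ EdgesCross pos e e := by
  rintro ⟨a, b, c, d, h1, h2, hab, hbc, hcd⟩
  rw [h1, Sym2.eq_iff] at h2
  rcases h2 with ⟨rfl, rfl⟩ | ⟨rfl, rfl⟩
  · exact lt_irrefl _ hab
  · omega

theorem cross_transfer {V : Type*} (VH : Finset V) (p1 p2 : V → ℕ)
    (h : ∀ u ∈ VH, ∀ v ∈ VH, p1 u < p1 v ↔ p2 u < p2 v)
    (e f : Sym2 V) (he : ∀ x ∈ e, x ∈ VH) (hf : ∀ x ∈ f, x ∈ VH) :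
    EdgesCross p1 e f → EdgesCross p2 e f := by
  rintro ⟨a, b, c, d, rfl, rfl, h1, h2, h3⟩
  have ha := he a (by simp)
  have hc := he c (by simp)
  have hb := hf b (by simp)
  have hd := hf d (by simp)
  exact ⟨a, b, c, d, rfl, rfl, (h a ha b hb).mp h1, (h b hb c hc).mp h2, (h c hc d hd).mp h3⟩

/-- If `V(G) = V(H)` (only edges are missing) and `e` is a missing
edge whose set `S(e)` of free pages has at least `m_add` elements, then `G` admits an
`ℓ`-page stack layout extending `⟨≺_H, σ_H⟩` iff `G − e` does. -/
theorem stmt0 {V : Type*} [DecidableEq V] (ℓ : ℕ) (hℓ : 1 ≤ ℓ)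
    (VH : Finset V) (EH EG : Finset (Sym2 V)) (hEHG : EH ⊆ EG)
    (hEG : ∀ e ∈ EG, ∀ x ∈ e, x ∈ VH) (hsimple : ∀ e ∈ EG, ¬ e.IsDiag)
    (posH : V → ℕ) (σH : Sym2 V → Fin ℓ)
    (hH : IsStackLayout ℓ VH EH posH σH)
    (e : Sym2 V) (heG : e ∈ EG) (heH : e ∉ EH)
    (hSe : (EG \ EH).card ≤
      Set.ncard {p : Fin ℓ | ∀ f ∈ EH, σH f = p →
        ¬ EdgesCross posH e f ∧ ¬ EdgesCross posH f e}) :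
    (∃ posG σG, IsStackLayout ℓ VH EG posG σG ∧ ExtendsLayout VH EH posH σH posG σG) ↔
      ∃ posG σG, IsStackLayout ℓ VH (EG.erase e) posG σG ∧
        ExtendsLayout VH EH posH σH posG σG := by
  constructor
  · rintro ⟨posG, σG, ⟨hinj, hcr⟩, hext⟩
    exact ⟨posG, σG, ⟨hinj, fun f hf g hg => hcr f (Finset.mem_of_mem_erase hf) g
      (Finset.mem_of_mem_erase hg)⟩, hext⟩
  · rintro ⟨posG, σG, ⟨hinj, hcr⟩, ⟨hpos, hσ⟩⟩
    -- find a free page p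
    set S : Set (Fin ℓ) := {p : Fin ℓ | ∀ f ∈ EH, σH f = p →
        ¬ EdgesCross posH e f ∧ ¬ EdgesCross posH f e} with hS
    set used : Finset (Fin ℓ) := ((EG \ EH).erase e).image σG with hused
    have hSfin : S.Finite := Set.toFinite _
    have hcard1 : used.card ≤ (EG \ EH).card - 1 := by
      calc used.card ≤ ((EG \ EH).erase e).card := Finset.card_image_le
        _ = (EG \ EH).card - 1 := Finset.card_erase_of_mem (by
            simp [Finset.mem_sdiff, heG, heH])
    have heGH : e ∈ EG \ EH := by simp [Finset.mem_sdiff, heG, heH]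
    have hpose : 1 ≤ (EG \ EH).card := Finset.card_pos.mpr ⟨e, heGH⟩
    have hlt : used.card < S.ncard := by omega
    have : ∃ p ∈ hSfin.toFinset, p ∉ used := by
      by_contra h
      push_neg at h
      have hc := Finset.card_le_card h
      rw [Set.ncard_eq_toFinset_card S hSfin] at hlt
      omega
    obtain ⟨p, hpS, hpu⟩ := this
    rw [Set.Finite.mem_toFinset] at hpS
    -- new assignment
    set σG' : Sym2 V → Fin ℓ := fun f => if f = e then p else σG f with hσG'
    have hVe : ∀ f ∈ EG, ∀ x ∈ f, x ∈ VH := hEG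
    have transferH : ∀ f g : Sym2 V, f ∈ EG → g ∈ EG →
        EdgesCross posG f g → EdgesCross posH f g := by
      intro f g hf hg
      exact cross_transfer VH posG posH (fun u hu v hv => (hpos u hu v hv).symm) f g
        (hEG f hf) (hEG g hg)
    refine ⟨posG, σG', ⟨hinj, ?_⟩, ⟨hpos, ?_⟩⟩
    · intro f hf g hg heq hcross
      by_cases hfe : f = e
      · subst hfe
        by_cases hge : g = f
        · exact edgesCross_irrefl posG f (hge ▸ hcross)
        · simp only [hσG', if_pos rfl, if_neg hge] at heq
          by_cases hgH : g ∈ EH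
          · have hgp : σH g = p := by rw [← hσ g hgH, heq]
            exact (hpS g hgH hgp).1 (transferH f g hf hg hcross)
          · exact hpu (Finset.mem_image.mpr ⟨g, by
              simp [Finset.mem_erase, hge, Finset.mem_sdiff, hg, hgH], heq.symm⟩)
      · by_cases hge : g = e
        · subst hge
          simp only [hσG', if_neg hfe, if_pos rfl] at heq
          by_cases hfH : f ∈ EH
          · have hfp : σH f = p := by rw [← hσ f hfH, heq]
            exact (hpS f hfH hfp).2 (transferH f g hf hg hcross)
          · exact hpu (Finset.mem_image.mpr ⟨f, by
              simp [Finset.mem_erase, hfe, Finset.mem_sdiff, hf, hfH], heq⟩)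
        · simp only [hσG', if_neg hfe, if_neg hge] at heq
          exact hcr f (Finset.mem_erase.mpr ⟨hfe, hf⟩) g
            (Finset.mem_erase.mpr ⟨hge, hg⟩) heq hcross
    · intro f hf
      have hfe : f ≠ e := fun h => heH (h ▸ hf)
      simp only [hσG', if_neg hfe]
      exact hσ f hf
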